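/- arXiv:1210.7589 — 3 statements merged into one kernel-verified Lean document; each statement's English description precedes it below -/
import Mathlib

section
/- Let X be a topological space and F a decomposition of X (a family of pairwise disjoint nonempty subsets whose union is X). If F is pointwise almost periodic (i.e., the family of closures of elements of F is again a decomposition of X), then F is recurrent (every element of F is either closed or non-proper, where L is proper if closure(L) \ L is closed). -/
open Set Topology

def IsDecomposition {X : Type*} (F : Set (Set X)) : Prop :=
  (∀ L ∈ F, L.Nonempty) ∧ (∀ L ∈ F, ∀ L' ∈ F, L ≠ L' → Disjoint L L') ∧ ⋃₀ F = univ

def IsProperSet {X : Type*} [TopologicalSpace X] (L : Set X) : Prop :=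
  IsClosed (closure L \ L)

def IsRecurrentSet {X : Type*} [TopologicalSpace X] (L : Set X) : Prop :=
  IsClosed L ∨ ¬ IsProperSet L

/-- If a decomposition is pointwise almost periodic (its family of closures
is again a decomposition), then it is recurrent. -/
theorem pap_implies_recurrent {X : Type*} [TopologicalSpace X] (F : Set (Set X))
    (hF : IsDecomposition F)
    (hpap : IsDecomposition ((fun L => closure L) '' F)) :
    ∀ L ∈ F, IsRecurrentSet L := by
  intro L hL
  rw [IsRecurrentSet]
  refine or_iff_not_imp_left.mpr fun hnc hprop => ?_
  have hne : (closure L \ L).Nonempty := by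
    rw [Set.sdiff_nonempty]
    exact fun hsub => hnc (isClosed_of_closure_subset hsub)
  obtain ⟨x, hx⟩ := hne
  obtain ⟨L', hL', hxL'⟩ : ∃ L' ∈ F, x ∈ L' := by
    have : x ∈ ⋃₀ F := by rw [hF.2.2]; trivial
    simpa using this
  have hLL' : L ≠ L' := fun h => hx.2 (h ▸ hxL')
  have hclo : closure L = closure L' := by
    by_contra hne'
    exact Set.disjoint_left.mp
      (hpap.2.1 _ ⟨L, hL, rfl⟩ _ ⟨L', hL', rfl⟩ hne') hx.1 (subset_closure hxL')
  have hsub : L' ⊆ closure L \ L := fun y hy =>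
    ⟨hclo ▸ subset_closure hy,
     fun hyL => Set.disjoint_left.mp (hF.2.1 L hL L' hL' hLL') hyL hy⟩
  have hcl' : closure L' ⊆ closure L \ L := closure_minimal hsub hprop
  have hLsub : L ⊆ closure L \ L := fun y hy => hcl' (hclo ▸ subset_closure hy)
  obtain ⟨z, hz⟩ := hF.1 L hL
  exact (hLsub hz).2 hz
end

section
/- Let X be a topological space, F a pointwise almost periodic decomposition of X, and L an element of F that is not closed. Then closure(L) = closure(closure(L) \ L); in particular closure(L) \ L is not closed, so L is not proper. -/
open Set Topology

/-- For a pointwise almost periodic decomposition, any non-closed element L satisfies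
closure L = closure (closure L \ L); hence closure L \ L is not closed and L is not proper. -/
theorem pap_nonclosed_not_proper {X : Type*} [TopologicalSpace X] (F : Set (Set X))
    (hF : IsDecomposition F)
    (hpap : IsDecomposition ((fun L => closure L) '' F))
    (L : Set X) (hL : L ∈ F) (hnc : ¬ IsClosed L) :
    closure L = closure (closure L \ L) ∧ ¬ IsClosed (closure L \ L) ∧ ¬ IsProperSet L := by
  obtain ⟨hne, hdisj, hcov⟩ := hF
  obtain ⟨-, hdisj', -⟩ := hpap
  -- closure L \ L nonempty
  have hdne : (closure L \ L).Nonempty := by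
    rw [Set.diff_nonempty]
    intro hsub
    have : L = closure L := subset_antisymm subset_closure hsub
    rw [this] at hnc
    exact hnc isClosed_closure
  obtain ⟨y, hycl, hyL⟩ := hdne
  -- y belongs to some L' ∈ F
  have hyU : y ∈ ⋃₀ F := by rw [hcov]; trivial
  obtain ⟨L', hL', hyL'⟩ := hyU
  have hLL' : L ≠ L' := fun h => hyL (h ▸ hyL')
  -- closure L' = closure L
  have hcc : closure L' = closure L := by
    by_contra hne'
    have := hdisj' (closure L') ⟨L', hL', rfl⟩ (closure L) ⟨L, hL, rfl⟩ hne'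
    exact (this.ne_of_mem (subset_closure hyL') hycl) rfl
  -- L' ⊆ closure L \ L
  have hsub : L' ⊆ closure L \ L := fun z hz =>
    ⟨hcc ▸ subset_closure hz, fun hzL => (hdisj L hL L' hL' hLL').ne_of_mem hzL hz rfl⟩
  have hmain : closure L = closure (closure L \ L) := by
    apply subset_antisymm
    · calc closure L = closure L' := hcc.symm
        _ ⊆ closure (closure L \ L) := closure_mono hsub
    · exact closure_minimal (diff_subset) isClosed_closure
  refine ⟨hmain, ?_, ?_⟩
  · intro hcl
    have : closure L = closure L \ L := hmain.trans hcl.closure_eq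
    obtain ⟨x, hx⟩ := hne L hL
    have hx' : x ∈ closure L := subset_closure hx
    rw [this] at hx'
    exact hx'.2 hx
  · intro hcl
    have : closure L = closure L \ L := hmain.trans hcl.closure_eq
    obtain ⟨x, hx⟩ := hne L hL
    have hx' : x ∈ closure L := subset_closure hx
    rw [this] at hx'
    exact hx'.2 hx
end

section
/- Let X be a topological space and F a decomposition of X such that the relation R = {(x,y) : y ∈ closure(L_x)} is closed in X × X and is an equivalence relation. If additionally F is pointwise almost periodic, then every element of F is recurrent: each L ∈ F is closed or non-proper. -/
open Set Topology

/-- If R = {(x,y) : y ∈ closure (L_x)} is a closed equivalence relation and F is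
pointwise almost periodic, then every element of F is recurrent. -/
theorem Rclosed_equiv_pap_recurrent {X : Type*} [TopologicalSpace X]
    (F : Set (Set X)) (hF : IsDecomposition F)
    (Lx : X → Set X) (hLx : ∀ x, Lx x ∈ F ∧ x ∈ Lx x)
    (hR : IsClosed {p : X × X | p.2 ∈ closure (Lx p.1)})
    (hrefl : ∀ x, x ∈ closure (Lx x))
    (hsymm : ∀ x y, y ∈ closure (Lx x) → x ∈ closure (Lx y))
    (htrans : ∀ x y z, y ∈ closure (Lx x) → z ∈ closure (Lx y) → z ∈ closure (Lx x))
    (hpap : IsDecomposition ((fun L => closure L) '' F)) :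
    ∀ L ∈ F, IsRecurrentSet L := by
  intro L hL
  by_cases hcl : IsClosed L
  · exact Or.inl hcl
  · refine Or.inr fun hprop => ?_
    -- pick y ∈ closure L \ L
    have hne : (closure L \ L).Nonempty := by
      rw [Set.diff_nonempty]
      intro hsub
      exact hcl (Set.Subset.antisymm subset_closure hsub ▸ isClosed_closure)
    obtain ⟨y, hy⟩ := hne
    -- pick x ∈ L
    obtain ⟨x, hx⟩ := hF.1 L hL
    have hLy : Lx y ∈ F := (hLx y).1
    have hyLy : y ∈ Lx y := (hLx y).2
    have hne' : Lx y ≠ L := fun h => hy.2 (h ▸ hyLy)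
    -- closures equal by pap
    have hceq : closure (Lx y) = closure L := by
      by_contra hc
      have := hpap.2.1 (closure (Lx y)) ⟨Lx y, hLy, rfl⟩ (closure L) ⟨L, hL, rfl⟩ hc
      exact (this.ne_of_mem (subset_closure hyLy) hy.1) rfl
    -- Lx y ⊆ closure L \ L
    have hsub : Lx y ⊆ closure L \ L := fun z hz =>
      ⟨hceq ▸ subset_closure hz, fun hzL =>
        (hF.2.1 (Lx y) hLy L hL hne').ne_of_mem hz hzL rfl⟩
    have : closure (Lx y) ⊆ closure L \ L := hprop.closure_subset_iff.mpr hsub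
    have hxin : x ∈ closure L \ L := this (hceq ▸ subset_closure hx)
    exact hxin.2 hx
end
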